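/- (Poincaré recurrence for m-transformations) If S is a measure-preserving m-transformation on a probability space (X,𝓑,μ) and μ(B) > 0, then for almost every x ∈ B there is an orbit of x that returns to B infinitely often. -/

import Mathlib

open MeasureTheory Set Filter Finset
open scoped ENNReal Classical

noncomputable section

/-- The stochastic kernel of a finite-multivalued transformation `S`:
`K(x,B) = |S(x) ∩ B| / |S(x)|`, valued in `ℝ≥0∞`. -/
def fker {X : Type*} (S : X → Finset X) (x : X) (B : Set X) : ℝ≥0∞ :=
  (((S x).filter (fun y => y ∈ B)).card : ℝ≥0∞) / ((S x).card : ℝ≥0∞)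

/-- The set `S⁻¹_{k;l}(B) = {x : |S(x)| = k, |S(x) ∩ B| = l}`. -/
def preimKL {X : Type*} (S : X → Finset X) (k l : ℕ) (B : Set X) : Set X :=
  {x | (S x).card = k ∧ ((S x).filter (fun y => y ∈ B)).card = l}

/-- The full preimage `S⁻¹(B) = {x : S(x) ∩ B ≠ ∅}`. -/
def fullPre {X : Type*} (S : X → Finset X) (B : Set X) : Set X :=
  {x | ∃ y ∈ S x, y ∈ B}

/-- The Koopman operator `Uf(x) = (1/|S(x)|) ∑_{y ∈ S(x)} f(y)`. -/
def koop {X : Type*} (S : X → Finset X) (f : X → ℝ) (x : X) : ℝ :=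
  (∑ y ∈ S x, f y) / ((S x).card : ℝ)

/-- Iterated full preimages. -/
def preN {X : Type*} (S : X → Finset X) : ℕ → Set X → Set X
  | 0, A => A
  | n + 1, A => fullPre S (preN S n A)

section Aux

variable {X : Type*}

lemma mem_fullPre_iff (S : X → Finset X) (A : Set X) (x : X) :
    x ∈ fullPre S A ↔ 1 ≤ ((S x).filter (fun y => y ∈ A)).card := by
  rw [Nat.one_le_iff_ne_zero, Ne, Finset.card_eq_zero, ← Ne, ← Finset.nonempty_iff_ne_empty,
    Finset.filter_nonempty_iff]
  rfl

lemma measurable_fullPre [MeasurableSpace X] (S : X → Finset X)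
    (hmeas : ∀ B : Set X, MeasurableSet B → ∀ k l : ℕ, MeasurableSet (preimKL S k l B))
    {A : Set X} (hA : MeasurableSet A) : MeasurableSet (fullPre S A) := by
  have h : fullPre S A = ⋃ (k : ℕ), ⋃ (l : ℕ), ⋃ (_ : 1 ≤ l), preimKL S k l A := by
    ext x
    simp only [Set.mem_iUnion, preimKL, Set.mem_setOf_eq, mem_fullPre_iff]
    constructor
    · intro h
      exact ⟨(S x).card, ((S x).filter (fun y => y ∈ A)).card, h, rfl, rfl⟩
    · rintro ⟨k, l, hl, -, h2⟩
      omega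
  rw [h]
  exact MeasurableSet.iUnion fun k => MeasurableSet.iUnion fun l =>
    MeasurableSet.iUnion fun _ => hmeas A hA k l

lemma fker_le_indicator (S : X → Finset X) (A : Set X) (x : X) :
    fker S x A ≤ (fullPre S A).indicator (fun _ => (1 : ℝ≥0∞)) x := by
  by_cases hx : x ∈ fullPre S A
  · rw [Set.indicator_of_mem hx]
    refine ENNReal.div_le_of_le_mul ?_
    rw [one_mul]
    exact_mod_cast Nat.cast_le.mpr (Finset.card_filter_le _ _)
  · rw [Set.indicator_of_notMem hx]
    have h : ((S x).filter (fun y => y ∈ A)) = ∅ := by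
      rw [Finset.filter_eq_empty_iff]
      intro y hy hyA
      exact hx ⟨y, hy, hyA⟩
    simp [fker, h]

lemma indicator_le_mul_fker (S : X → Finset X) {m : ℕ} (hm : 0 < m)
    (hcard : ∀ x, 1 ≤ (S x).card ∧ (S x).card ≤ m) (A : Set X) (x : X) :
    (fullPre S A).indicator (fun _ => (1 : ℝ≥0∞)) x ≤ (m : ℝ≥0∞) * fker S x A := by
  by_cases hx : x ∈ fullPre S A
  · rw [Set.indicator_of_mem hx]
    have hl : 1 ≤ ((S x).filter (fun y => y ∈ A)).card := (mem_fullPre_iff S A x).mp hx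
    have hk1 : 1 ≤ (S x).card := (hcard x).1
    have hkm : (S x).card ≤ m := (hcard x).2
    unfold fker
    rw [← mul_div_assoc]
    rw [ENNReal.le_div_iff_mul_le (Or.inl (by exact_mod_cast (by omega : (S x).card ≠ 0)))
      (Or.inl (ENNReal.natCast_ne_top _))]
    rw [one_mul]
    have : (S x).card ≤ m * ((S x).filter (fun y => y ∈ A)).card := by
      calc (S x).card ≤ m := hkm
        _ ≤ m * ((S x).filter (fun y => y ∈ A)).card := Nat.le_mul_of_pos_right m (by omega)
    exact_mod_cast this
  · rw [Set.indicator_of_notMem hx]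
    exact zero_le

variable [MeasurableSpace X] {μ : Measure X} [IsProbabilityMeasure μ]

lemma meas_le_fullPre (S : X → Finset X)
    (hmeas : ∀ B : Set X, MeasurableSet B → ∀ k l : ℕ, MeasurableSet (preimKL S k l B))
    (hpres : ∀ B : Set X, MeasurableSet B → ∫⁻ x, fker S x B ∂μ = μ B)
    {A : Set X} (hA : MeasurableSet A) : μ A ≤ μ (fullPre S A) := by
  have hFP : MeasurableSet (fullPre S A) := measurable_fullPre S hmeas hA
  calc μ A = ∫⁻ x, fker S x A ∂μ := (hpres A hA).symm
    _ ≤ ∫⁻ x, (fullPre S A).indicator (fun _ => (1 : ℝ≥0∞)) x ∂μ :=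
        lintegral_mono (fker_le_indicator S A)
    _ = μ (fullPre S A) := by
        rw [lintegral_indicator hFP]
        simp

lemma fullPre_le_mul (S : X → Finset X) {m : ℕ} (hm : 0 < m)
    (hcard : ∀ x, 1 ≤ (S x).card ∧ (S x).card ≤ m)
    (hmeas : ∀ B : Set X, MeasurableSet B → ∀ k l : ℕ, MeasurableSet (preimKL S k l B))
    (hpres : ∀ B : Set X, MeasurableSet B → ∫⁻ x, fker S x B ∂μ = μ B)
    {A : Set X} (hA : MeasurableSet A) : μ (fullPre S A) ≤ (m : ℝ≥0∞) * μ A := by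
  have hFP : MeasurableSet (fullPre S A) := measurable_fullPre S hmeas hA
  calc μ (fullPre S A) = ∫⁻ x, (fullPre S A).indicator (fun _ => (1 : ℝ≥0∞)) x ∂μ := by
        rw [lintegral_indicator hFP]; simp
    _ ≤ ∫⁻ x, (m : ℝ≥0∞) * fker S x A ∂μ :=
        lintegral_mono (indicator_le_mul_fker S hm hcard A)
    _ = (m : ℝ≥0∞) * ∫⁻ x, fker S x A ∂μ :=
        lintegral_const_mul' _ _ (ENNReal.natCast_ne_top m)
    _ = (m : ℝ≥0∞) * μ A := by rw [hpres A hA]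

lemma measurable_preN (S : X → Finset X)
    (hmeas : ∀ B : Set X, MeasurableSet B → ∀ k l : ℕ, MeasurableSet (preimKL S k l B))
    {A : Set X} (hA : MeasurableSet A) : ∀ n, MeasurableSet (preN S n A)
  | 0 => hA
  | n + 1 => measurable_fullPre S hmeas (measurable_preN S hmeas hA n)

lemma preN_null (S : X → Finset X) {m : ℕ} (hm : 0 < m)
    (hcard : ∀ x, 1 ≤ (S x).card ∧ (S x).card ≤ m)
    (hmeas : ∀ B : Set X, MeasurableSet B → ∀ k l : ℕ, MeasurableSet (preimKL S k l B))
    (hpres : ∀ B : Set X, MeasurableSet B → ∫⁻ x, fker S x B ∂μ = μ B)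
    {A : Set X} (hA : MeasurableSet A) (hA0 : μ A = 0) : ∀ n, μ (preN S n A) = 0 := by
  intro n
  induction n with
  | zero => exact hA0
  | succ n ih =>
      have h := fullPre_le_mul S hm hcard hmeas hpres (measurable_preN S hmeas hA n) (μ := μ)
      have : μ (preN S (n + 1) A) ≤ (m : ℝ≥0∞) * μ (preN S n A) := h
      rw [ih, mul_zero] at this
      exact le_antisymm this zero_le

end Aux

section Paths

variable {X : Type*}

lemma mem_preN_iff (S : X → Finset X) (A : Set X) :
    ∀ (n : ℕ) (x : X), x ∈ preN S n A ↔
      ∃ p : ℕ → X, p 0 = x ∧ (∀ i < n, p (i + 1) ∈ S (p i)) ∧ p n ∈ A := by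
  intro n
  induction n with
  | zero =>
      intro x
      constructor
      · intro hx
        exact ⟨fun _ => x, rfl, fun i hi => absurd hi (Nat.not_lt_zero i), hx⟩
      · rintro ⟨p, hp0, -, hpn⟩
        rw [← hp0]; exact hpn
  | succ n ih =>
      intro x
      constructor
      · rintro ⟨y, hyS, hy⟩
        obtain ⟨q, hq0, hqs, hqn⟩ := (ih y).mp hy
        refine ⟨fun i => if i = 0 then x else q (i - 1), if_pos rfl, ?_, ?_⟩
        · intro i hi
          match i with
          | 0 => simpa [hq0] using hyS
          | j + 1 =>
              simp only [Nat.succ_ne_zero, if_neg, Nat.add_sub_cancel]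
              have : j < n := by omega
              simpa using hqs j this
        · simpa using hqn
      · rintro ⟨p, hp0, hps, hpn⟩
        refine ⟨p 1, by rw [← hp0]; exact hps 0 (Nat.succ_pos n), ?_⟩
        exact (ih (p 1)).mpr ⟨fun i => p (i + 1), rfl, fun i hi => hps (i + 1) (by omega), hpn⟩

lemma preN_add (S : X → Finset X) (A : Set X) (n j : ℕ) :
    preN S (n + j) A = preN S n (preN S j A) := by
  induction n with
  | zero => rw [Nat.zero_add]; rfl
  | succ n ih =>
      rw [show n + 1 + j = (n + j) + 1 from by omega]
      show fullPre S (preN S (n + j) A) = fullPre S (preN S n (preN S j A))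
      rw [ih]

end Paths

/-- The once-return lemma: almost every point of a measurable set `A` has a finite
path (of positive length) returning to `A`. -/
lemma once_return {X : Type*} [MeasurableSpace X] (μ : Measure X)
    [IsProbabilityMeasure μ] (S : X → Finset X)
    (hmeas : ∀ B : Set X, MeasurableSet B → ∀ k l : ℕ, MeasurableSet (preimKL S k l B))
    (hpres : ∀ B : Set X, MeasurableSet B → ∫⁻ x, fker S x B ∂μ = μ B)
    {A : Set X} (hA : MeasurableSet A) :
    μ (A \ ⋃ n : ℕ, preN S (n + 1) A) = 0 := by
  set D := ⋃ n : ℕ, preN S (n + 1) A with hDdef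
  have hDmeas : MeasurableSet D :=
    MeasurableSet.iUnion fun n => measurable_preN S hmeas hA (n + 1)
  have hsub : fullPre S (A ∪ D) ⊆ D := by
    rintro x ⟨y, hyS, hy⟩
    rcases hy with hy | hy
    · exact Set.mem_iUnion.mpr ⟨0, ⟨y, hyS, hy⟩⟩
    · obtain ⟨n, hn⟩ := Set.mem_iUnion.mp hy
      exact Set.mem_iUnion.mpr ⟨n + 1, ⟨y, hyS, hn⟩⟩
  have h1 : μ (A ∪ D) ≤ μ D :=
    le_trans (meas_le_fullPre S hmeas hpres (hA.union hDmeas)) (measure_mono hsub)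
  have h2 : μ ((A ∪ D) \ D) = μ (A ∪ D) - μ D :=
    measure_diff Set.subset_union_right hDmeas.nullMeasurableSet (measure_ne_top μ D)
  have h3 : μ ((A ∪ D) \ D) = 0 := by
    rw [h2]; exact tsub_eq_zero_of_le h1
  exact measure_mono_null (Set.diff_subset_diff_left Set.subset_union_left) h3

/-- Poincaré recurrence for m-transformations: if `S` preserves `μ` and
`μ(B) > 0`, then a.e. point of `B` has an orbit returning to `B` infinitely often. -/
theorem poincare_recurrence {X : Type*} [MeasurableSpace X] (μ : Measure X)
    [IsProbabilityMeasure μ] (m : ℕ) (hm : 0 < m) (S : X → Finset X)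
    (hcard : ∀ x, 1 ≤ (S x).card ∧ (S x).card ≤ m)
    (hmeas : ∀ B : Set X, MeasurableSet B → ∀ k l : ℕ, MeasurableSet (preimKL S k l B))
    (hpres : ∀ B : Set X, MeasurableSet B → ∫⁻ x, fker S x B ∂μ = μ B)
    (B : Set X) (hB : MeasurableSet B) (hBpos : 0 < μ B) :
    ∀ᵐ x ∂μ, x ∈ B → ∃ orb : ℕ → X, orb 0 = x ∧ (∀ n, orb (n + 1) ∈ S (orb n)) ∧
        {n : ℕ | orb n ∈ B}.Infinite := by
  classical
  set D := ⋃ n : ℕ, preN S (n + 1) B with hDdef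
  set Z0 := B \ D with hZ0def
  set Z := ⋃ j : ℕ, preN S j Z0 with hZdef
  have hZ0meas : MeasurableSet Z0 :=
    hB.diff (MeasurableSet.iUnion fun n => measurable_preN S hmeas hB (n + 1))
  have hZ0null : μ Z0 = 0 := once_return μ S hmeas hpres hB
  have hZnull : μ Z = 0 :=
    measure_iUnion_null fun j => preN_null S hm hcard hmeas hpres hZ0meas hZ0null j
  -- the good set
  set C := B \ Z with hCdef
  -- every point of C has a path of positive length returning to C
  have hstepC : ∀ z ∈ C, ∃ n, ∃ p : ℕ → X, 1 ≤ n ∧ p 0 = z ∧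
      (∀ i < n, p (i + 1) ∈ S (p i)) ∧ p n ∈ C := by
    intro z hz
    obtain ⟨hzB, hzZ⟩ := hz
    have hzZ0 : z ∉ Z0 := fun h => hzZ (Set.mem_iUnion.mpr ⟨0, h⟩)
    have hzD : z ∈ D := by
      by_contra hD
      exact hzZ0 ⟨hzB, hD⟩
    obtain ⟨k, hk⟩ := Set.mem_iUnion.mp hzD
    obtain ⟨p, hp0, hps, hpn⟩ := (mem_preN_iff S B (k + 1) z).mp hk
    refine ⟨k + 1, p, by omega, hp0, hps, hpn, ?_⟩
    -- endpoint is not in Z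
    intro hmem
    obtain ⟨j, hj⟩ := Set.mem_iUnion.mp hmem
    have : z ∈ preN S (k + 1) (preN S j Z0) :=
      (mem_preN_iff S (preN S j Z0) (k + 1) z).mpr ⟨p, hp0, hps, hj⟩
    rw [← preN_add] at this
    exact hzZ (Set.mem_iUnion.mpr ⟨k + 1 + j, this⟩)
  -- global choice of continuation paths
  have hglobal : ∀ z : X, ∃ n, ∃ p : ℕ → X, 1 ≤ n ∧ p 0 = z ∧
      (∀ i < n, p (i + 1) ∈ S (p i)) ∧ (z ∈ C → p n ∈ C) := by
    intro z
    by_cases hz : z ∈ C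
    · obtain ⟨n, p, h1, h2, h3, h4⟩ := hstepC z hz
      exact ⟨n, p, h1, h2, h3, fun _ => h4⟩
    · obtain ⟨y, hy⟩ := Finset.card_pos.mp (Nat.lt_of_lt_of_le Nat.zero_lt_one (hcard z).1)
      refine ⟨1, fun i => if i = 0 then z else y, le_refl 1, if_pos rfl, ?_, fun h => absurd h hz⟩
      intro i hi
      have : i = 0 := by omega
      subst this
      simpa using hy
  choose n p hn hp0 hps hpC using hglobal
  -- the a.e. statement reduces to: every point of C has a good orbit
  have key : ∀ x ∈ C, ∃ orb : ℕ → X, orb 0 = x ∧ (∀ t, orb (t + 1) ∈ S (orb t)) ∧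
      {t : ℕ | orb t ∈ B}.Infinite := by
    intro x hxC
    -- the state machine: (current segment base, index within segment)
    set F : ℕ → X × ℕ := fun t => Nat.rec (x, 0)
      (fun _ st => if st.2 + 1 < n st.1 then (st.1, st.2 + 1) else (p st.1 (n st.1), 0)) t
      with hFdef
    have hFs : ∀ t, F (t + 1) = if (F t).2 + 1 < n (F t).1 then ((F t).1, (F t).2 + 1)
        else (p (F t).1 (n (F t).1), 0) := fun t => rfl
    have hinv : ∀ t, (F t).1 ∈ C ∧ (F t).2 < n (F t).1 := by
      intro t
      induction t with
      | zero => exact ⟨hxC, hn x⟩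
      | succ t ih =>
          rw [hFs]
          split
          · next h => exact ⟨ih.1, h⟩
          · exact ⟨hpC _ ih.1, hn _⟩
    set orb : ℕ → X := fun t => p (F t).1 (F t).2 with horbdef
    have horb0 : orb 0 = x := hp0 x
    have horbstep : ∀ t, orb (t + 1) ∈ S (orb t) := by
      intro t
      have hi := (hinv t).2
      show p (F (t + 1)).1 (F (t + 1)).2 ∈ S (p (F t).1 (F t).2)
      rw [hFs]
      split
      · exact hps (F t).1 (F t).2 hi
      · simp only
        rw [hp0]
        have heq : (F t).2 + 1 = n (F t).1 := by omega
        rw [← heq]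
        exact hps (F t).1 (F t).2 hi
    -- index returns to 0 infinitely often
    have hret : ∀ d t, (F t).2 + d + 1 = n (F t).1 → (F (t + d + 1)).2 = 0 := by
      intro d
      induction d with
      | zero =>
          intro t h
          rw [hFs, if_neg (by omega)]
      | succ d ih =>
          intro t h
          have h2 : (F t).2 + 1 < n (F t).1 := by omega
          have hF1 : F (t + 1) = ((F t).1, (F t).2 + 1) := by rw [hFs, if_pos h2]
          have h3 : (F (t + 1)).2 + d + 1 = n (F (t + 1)).1 := by rw [hF1]; simpa using (by omega)
          have h4 := ih (t + 1) h3
          rw [show t + (d + 1) + 1 = t + 1 + d + 1 from by omega]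
          exact h4
    have hvisit : ∀ t, ∃ t', t < t' ∧ orb t' ∈ B := by
      intro t
      have hi := (hinv t).2
      refine ⟨t + (n (F t).1 - (F t).2 - 1) + 1, by omega, ?_⟩
      have h0 := hret (n (F t).1 - (F t).2 - 1) t (by omega)
      show p (F (t + (n (F t).1 - (F t).2 - 1) + 1)).1 (F (t + (n (F t).1 - (F t).2 - 1) + 1)).2 ∈ B
      rw [h0, hp0]
      exact (hinv (t + (n (F t).1 - (F t).2 - 1) + 1)).1.1
    refine ⟨orb, horb0, horbstep, Set.infinite_of_forall_exists_gt ?_⟩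
    intro a
    obtain ⟨t', h1, h2⟩ := hvisit a
    exact ⟨t', h2, h1⟩
  -- conclude
  rw [ae_iff]
  refine measure_mono_null ?_ hZnull
  intro x hx
  simp only [Set.mem_setOf_eq] at hx
  by_contra hxZ
  exact hx fun hxB => key x ⟨hxB, hxZ⟩
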